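/- With the setup of an extended bicoloring of a doubled STS: if c_j > (v+1)/2 for some color j with n_j ≥ 1, a contradiction arises; hence no extended bicoloring exists with some color used on more than half of the v+1 new points while that color also appears in V. -/

import Mathlib

open Finset

def isSTS {α : Type*} [DecidableEq α] (V : Finset α) (B : Finset (Finset α)) : Prop :=
  (∀ T ∈ B, T ⊆ V ∧ T.card = 3) ∧
  ∀ p : Finset α, p ⊆ V → p.card = 2 → ∃! T, T ∈ B ∧ p ⊆ T

def isOneFactorization {α : Type*} [DecidableEq α] {v : ℕ}
    (X : Finset α) (F : Fin v → Finset (Finset α)) : Prop :=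
  (∀ i, ∀ e ∈ F i, e ⊆ X ∧ e.card = 2) ∧
  (∀ i, ∀ x ∈ X, ∃! e, e ∈ F i ∧ x ∈ e) ∧
  (∀ e : Finset α, e ⊆ X → e.card = 2 → ∃! i, e ∈ F i)

def doublingBlocks {α : Type*} [DecidableEq α] {v : ℕ}
    (a : Fin v → α) (F : Fin v → Finset (Finset α)) : Finset (Finset α) :=
  Finset.univ.biUnion fun i => (F i).image fun e => insert (a i) e

def isStrictBicoloring {α : Type*} [DecidableEq α] {k : ℕ}
    (V : Finset α) (B : Finset (Finset α)) (φ : α → Fin k) : Prop :=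
  (∀ T ∈ B, (T.image φ).card = 2) ∧ ∀ i : Fin k, ∃ x ∈ V, φ x = i

theorem stmt_6 {α : Type*} [DecidableEq α] (v k : ℕ)
    (V : Finset α) (B : Finset (Finset α)) (hV : V.card = v) (hSTS : isSTS V B)
    (Y : Finset α) (hY : Y.card = v + 1) (hdisj : Disjoint V Y)
    (F : Fin v → Finset (Finset α)) (hF : isOneFactorization Y F)
    (a : Fin v → α) (ha : Function.Injective a) (haV : V = Finset.image a Finset.univ)
    (ψ : α → Fin k)
    (hext : isStrictBicoloring (V ∪ Y) (B ∪ doublingBlocks a F) ψ)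
    (hres : isStrictBicoloring V B ψ)
    (n : Fin k → ℕ) (hn : ∀ i, (V.filter fun x => ψ x = i).card = n i)
    (c : Fin k → ℕ) (hc : ∀ i, (Y.filter fun x => ψ x = i).card = c i)
    (j : Fin k) (hcj : 2 * c j > v + 1) (hnj : 1 ≤ n j) :
    False := by
  obtain ⟨hext1, _⟩ := hext
  obtain ⟨hF1, hF2, hF3⟩ := hF
  have hne : (V.filter fun x => ψ x = j).Nonempty := by
    rw [← Finset.card_pos, hn]; omega
  obtain ⟨aq, haq⟩ := hne
  rw [Finset.mem_filter] at haq
  obtain ⟨haqV, haqj⟩ := haq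
  rw [haV, Finset.mem_image] at haqV
  obtain ⟨q, -, rfl⟩ := haqV
  set E := F q with hE
  -- edges of the 1-factor are pairwise disjoint
  have hpd : (E : Set (Finset α)).PairwiseDisjoint id := by
    intro e he e' he' hnee
    simp only [Function.onFun, id]
    rw [Finset.disjoint_left]
    intro x hx hx'
    have hxY : x ∈ Y := (hF1 q e he).1 hx
    obtain ⟨f, -, huniq⟩ := hF2 q x hxY
    exact hnee ((huniq e ⟨he, hx⟩).trans (huniq e' ⟨he', hx'⟩).symm)
  have hYeq : Y = E.biUnion id := by
    apply Finset.Subset.antisymm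
    · intro x hx
      obtain ⟨e, ⟨heE, hxe⟩, -⟩ := hF2 q x hx
      exact Finset.mem_biUnion.2 ⟨e, heE, hxe⟩
    · intro x hx
      obtain ⟨e, heE, hxe⟩ := Finset.mem_biUnion.1 hx
      exact (hF1 q e heE).1 hxe
  have hcard : v + 1 = 2 * E.card := by
    rw [← hY, hYeq, Finset.card_biUnion hpd]
    simp only [id]
    rw [Finset.sum_congr rfl (fun e he => (hF1 q e he).2)]
    simp [Finset.sum_const, Nat.mul_comm]; rfl
  -- each edge has at most one point of color j
  have hkey : ∀ e ∈ E, (e.filter fun x => ψ x = j).card ≤ 1 := by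
    intro e heE
    by_contra h
    push_neg at h
    have h2 : (e.filter fun x => ψ x = j).card = 2 := by
      have := Finset.card_filter_le e (fun x => ψ x = j)
      rw [(hF1 q e heE).2] at this
      omega
    have hfe : e.filter (fun x => ψ x = j) = e :=
      Finset.eq_of_subset_of_card_le (Finset.filter_subset _ _)
        (by rw [(hF1 q e heE).2, h2])
    have hall : ∀ x ∈ e, ψ x = j := by
      intro x hx
      have : x ∈ e.filter fun x => ψ x = j := hfe.symm ▸ hx
      exact (Finset.mem_filter.1 this).2
    have hT : insert (a q) e ∈ B ∪ doublingBlocks a F := by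
      apply Finset.mem_union_right
      unfold doublingBlocks
      exact Finset.mem_biUnion.2 ⟨q, Finset.mem_univ q,
        Finset.mem_image.2 ⟨e, heE, rfl⟩⟩
    have h2' := hext1 _ hT
    have himg : (insert (a q) e).image ψ ⊆ {j} := by
      intro i hi
      obtain ⟨x, hx, rfl⟩ := Finset.mem_image.1 hi
      rcases Finset.mem_insert.1 hx with rfl | hx
      · simp [haqj]
      · simp [hall x hx]
    have hle := Finset.card_le_card himg
    rw [h2', Finset.card_singleton] at hle
    omega
  -- conclude
  have : c j ≤ E.card := by
    rw [← hc, hYeq]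
    calc ((E.biUnion id).filter fun x => ψ x = j).card
        = (E.biUnion fun e => e.filter fun x => ψ x = j).card := by
          simp [Finset.filter_biUnion]
      _ ≤ ∑ e ∈ E, (e.filter fun x => ψ x = j).card := Finset.card_biUnion_le
      _ ≤ ∑ e ∈ E, 1 := Finset.sum_le_sum hkey
      _ = E.card := by simp
  omega
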